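/- Let p, q ∈ (0,1) and r ∈ ℝ, and set s = √(p(1−p)q(1−q)). All four values π_{p,q,r}(1,1), π_{p,q,r}(1,0), π_{p,q,r}(0,1), π_{p,q,r}(0,0) are nonnegative and sum to 1 (i.e., π_{p,q,r} is a probability mass function on {0,1}×{0,1}) if and only if −min{ (pq/((1−p)(1−q)))^{1/2}, (((1−p)(1−q))/(pq))^{1/2} } ≤ r ≤ min{ (p(1−q)/(q(1−p)))^{1/2}, (q(1−p)/(p(1−q)))^{1/2} }. -/

import Mathlib

/-- The per-edge joint pmf for a pair of `R`-correlated inhomogeneous Erdős–Rényi graphs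
with different marginal edge probabilities `p` and `q` and correlation `r`. -/
noncomputable def piCorr2 (p q r : ℝ) : Bool × Bool → ℝ
  | (true, true) => p * q + r * Real.sqrt (p * (1 - p) * q * (1 - q))
  | (true, false) => p * (1 - q) - r * Real.sqrt (p * (1 - p) * q * (1 - q))
  | (false, true) => (1 - p) * q - r * Real.sqrt (p * (1 - p) * q * (1 - q))
  | (false, false) => (1 - p) * (1 - q) + r * Real.sqrt (p * (1 - p) * q * (1 - q))

theorem stmt14 (p q r : ℝ) (hp : p ∈ Set.Ioo (0 : ℝ) 1) (hq : q ∈ Set.Ioo (0 : ℝ) 1) :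
    ((∀ ab : Bool × Bool, 0 ≤ piCorr2 p q r ab) ∧ ∑ ab : Bool × Bool, piCorr2 p q r ab = 1) ↔
      (-(min (Real.sqrt (p * q / ((1 - p) * (1 - q))))
            (Real.sqrt ((1 - p) * (1 - q) / (p * q)))) ≤ r ∧
        r ≤ min (Real.sqrt (p * (1 - q) / (q * (1 - p))))
            (Real.sqrt (q * (1 - p) / (p * (1 - q))))) := by
  obtain ⟨hp0, hp1⟩ := hp
  obtain ⟨hq0, hq1⟩ := hq
  have h1p : 0 < 1 - p := by linarith
  have h1q : 0 < 1 - q := by linarith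
  have hprod : 0 < p * (1 - p) * q * (1 - q) := by positivity
  set s := Real.sqrt (p * (1 - p) * q * (1 - q)) with hs_def
  have hs : 0 < s := Real.sqrt_pos.mpr hprod
  have hs2 : s ^ 2 = p * (1 - p) * q * (1 - q) := Real.sq_sqrt hprod.le
  have e1 : Real.sqrt (p * q / ((1 - p) * (1 - q))) = p * q / s := by
    rw [show p * q / ((1 - p) * (1 - q)) = (p * q) ^ 2 / (p * (1 - p) * q * (1 - q)) by
      field_simp, Real.sqrt_div (by positivity), Real.sqrt_sq (by positivity)]
  have e2 : Real.sqrt ((1 - p) * (1 - q) / (p * q)) = (1 - p) * (1 - q) / s := by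
    rw [show (1 - p) * (1 - q) / (p * q) = ((1 - p) * (1 - q)) ^ 2 / (p * (1 - p) * q * (1 - q)) by
      field_simp, Real.sqrt_div (by positivity), Real.sqrt_sq (by positivity)]
  have e3 : Real.sqrt (p * (1 - q) / (q * (1 - p))) = p * (1 - q) / s := by
    rw [show p * (1 - q) / (q * (1 - p)) = (p * (1 - q)) ^ 2 / (p * (1 - p) * q * (1 - q)) by
      field_simp, Real.sqrt_div (by positivity), Real.sqrt_sq (by positivity)]
  have e4 : Real.sqrt (q * (1 - p) / (p * (1 - q))) = q * (1 - p) / s := by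
    rw [show q * (1 - p) / (p * (1 - q)) = (q * (1 - p)) ^ 2 / (p * (1 - p) * q * (1 - q)) by
      field_simp, Real.sqrt_div (by positivity), Real.sqrt_sq (by positivity)]
  rw [e1, e2, e3, e4]
  constructor
  · rintro ⟨h, -⟩
    have h11 := h (true, true)
    have h10 := h (true, false)
    have h01 := h (false, true)
    have h00 := h (false, false)
    simp only [piCorr2] at h11 h10 h01 h00
    rw [← hs_def] at h11 h10 h01 h00
    refine ⟨?_, ?_⟩
    · rw [neg_le, le_min_iff]
      constructor
      · rw [le_div_iff₀ hs]; nlinarith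
      · rw [le_div_iff₀ hs]; nlinarith
    · rw [le_min_iff]
      constructor
      · rw [le_div_iff₀ hs]; nlinarith
      · rw [le_div_iff₀ hs]; nlinarith
  · rintro ⟨h1, h2⟩
    rw [neg_le, le_min_iff] at h1
    rw [le_min_iff] at h2
    obtain ⟨h1a, h1b⟩ := h1
    obtain ⟨h2a, h2b⟩ := h2
    rw [le_div_iff₀ hs] at h1a h1b h2a h2b
    refine ⟨?_, ?_⟩
    · rintro ⟨a | a, b | b⟩ <;> simp only [piCorr2] <;> rw [← hs_def] <;> nlinarith
    · simp only [Fintype.sum_prod_type, Fintype.sum_bool, piCorr2]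
      ring
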